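/- arXiv:1403.5180 — 2 statements merged into one kernel-verified Lean document; each statement's English description precedes it below -/
import Mathlib

section
/- Let (x0(s), u0(s)) on [t,T] with x0(t) = z be a feasible trajectory (satisfying dynamics, state/control constraints, and terminal constraint). Suppose there exist ε ∈ ℝ, a continuous function l on X × U, and v ∈ C^1([0,T] × X) such that: (i) l(x,u) + ∂v/∂s(s,x) + ∇_x v(s,x)·f(x,u) ≥ 0 on [t,T] × X × U; (ii) v(T,x) = 0 for x ∈ X_T; (iii) ∫_t^T [l(x0(s),u0(s)) + ∂v/∂s(s,x0(s)) + ∇_x v(s,x0(s))·f(x0(s),u0(s))] ds ≤ ε. Then (x0,u0) is ε-optimal for OCP(l,z): its cost ∫_t^T l(x0(s),u0(s)) ds exceeds the cost of any feasible trajectory from z by at most ε. -/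
/-- Proposition 2 (ε-optimality from the relaxed HJB conditions): if `(l, v, ε)` satisfies
the relaxed HJB positivity, terminal and ε-fit conditions along a feasible trajectory
`(x0, u0)`, then `(x0, u0)` is ε-optimal for OCP(l, z). -/
theorem hjb_eps_optimality
    {dX dU : ℕ}
    (X : Set (EuclideanSpace ℝ (Fin dX))) (U : Set (EuclideanSpace ℝ (Fin dU)))
    (XT : Set (EuclideanSpace ℝ (Fin dX)))
    (hXcpt : IsCompact X) (hUcpt : IsCompact U) (hXT : XT ⊆ X)
    (f : EuclideanSpace ℝ (Fin dX) → EuclideanSpace ℝ (Fin dU) → EuclideanSpace ℝ (Fin dX))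
    (hf : ContDiff ℝ 1 (fun p : EuclideanSpace ℝ (Fin dX) × EuclideanSpace ℝ (Fin dU) => f p.1 p.2))
    (l : EuclideanSpace ℝ (Fin dX) → EuclideanSpace ℝ (Fin dU) → ℝ)
    (hl : Continuous (fun p : EuclideanSpace ℝ (Fin dX) × EuclideanSpace ℝ (Fin dU) => l p.1 p.2))
    (t T : ℝ) (hT : t ≤ T) (z : EuclideanSpace ℝ (Fin dX))
    (ε : ℝ)
    -- the given feasible trajectory
    (x0 : ℝ → EuclideanSpace ℝ (Fin dX)) (u0 : ℝ → EuclideanSpace ℝ (Fin dU))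
    (hx0dyn : ∀ s ∈ Set.Icc t T, HasDerivAt x0 (f (x0 s) (u0 s)) s)
    (hx0X : ∀ s ∈ Set.Icc t T, x0 s ∈ X)
    (hu0U : ∀ s ∈ Set.Icc t T, u0 s ∈ U)
    (hx0init : x0 t = z) (hx0final : x0 T ∈ XT)
    (hx0int : IntervalIntegrable (fun s => l (x0 s) (u0 s)) MeasureTheory.volume t T)
    -- the C¹ value function candidate and the relaxed HJB conditions
    (v : ℝ × EuclideanSpace ℝ (Fin dX) → ℝ)
    (hv : ContDiff ℝ 1 v)
    (hHJBpos : ∀ s ∈ Set.Icc t T, ∀ x ∈ X, ∀ u ∈ U,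
      l x u + fderiv ℝ v (s, x) (1, f x u) ≥ 0)
    (hterm : ∀ x ∈ XT, v (T, x) = 0)
    (hfitint : IntervalIntegrable
      (fun s => l (x0 s) (u0 s) + fderiv ℝ v (s, x0 s) (1, f (x0 s) (u0 s)))
      MeasureTheory.volume t T)
    (hfit : (∫ s in t..T, (l (x0 s) (u0 s) + fderiv ℝ v (s, x0 s) (1, f (x0 s) (u0 s)))) ≤ ε)
    -- any feasible competing trajectory
    (x : ℝ → EuclideanSpace ℝ (Fin dX)) (u : ℝ → EuclideanSpace ℝ (Fin dU))
    (hxdyn : ∀ s ∈ Set.Icc t T, HasDerivAt x (f (x s) (u s)) s)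
    (hxX : ∀ s ∈ Set.Icc t T, x s ∈ X)
    (huU : ∀ s ∈ Set.Icc t T, u s ∈ U)
    (hxinit : x t = z) (hxfinal : x T ∈ XT)
    (hxint : IntervalIntegrable (fun s => l (x s) (u s)) MeasureTheory.volume t T) :
    (∫ s in t..T, l (x0 s) (u0 s)) ≤ (∫ s in t..T, l (x s) (u s)) + ε := by

  -- derivative of s ↦ v (s, y s) along a trajectory
  have chain : ∀ (y : ℝ → EuclideanSpace ℝ (Fin dX)) (w : ℝ → EuclideanSpace ℝ (Fin dU)),
      (∀ s ∈ Set.Icc t T, HasDerivAt y (f (y s) (w s)) s) →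
      ∀ s ∈ Set.Icc t T,
        HasDerivAt (fun s => v (s, y s)) (fderiv ℝ v (s, y s) (1, f (y s) (w s))) s := by
    intro y w hdyn s hs
    have h1 : HasDerivAt (fun s => (s, y s)) ((1 : ℝ), f (y s) (w s)) s :=
      (hasDerivAt_id s).prodMk (hdyn s hs)
    exact ((hv.differentiable one_ne_zero (s, y s)).hasFDerivAt).comp_hasDerivAt s h1
  -- Step 1: v(t,z) ≤ ∫ l(x,u) for the competing trajectory
  have hcont : ContinuousOn (fun s => v (s, x s)) (Set.Icc t T) := by
    intro s hs
    exact ((chain x u hxdyn s hs).continuousAt).continuousWithinAt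
  have hφint : MeasureTheory.IntegrableOn (fun s => -(l (x s) (u s))) (Set.Icc t T) := by
    exact (intervalIntegrable_iff_integrableOn_Icc_of_le hT).1 hxint.neg
  have key1 : (∫ s in t..T, -(l (x s) (u s))) ≤ v (T, x T) - v (t, x t) := by
    apply intervalIntegral.integral_le_sub_of_hasDeriv_right_of_le hT hcont
      (g' := fun s => fderiv ℝ v (s, x s) (1, f (x s) (u s)))
      (fun s hs => ((chain x u hxdyn s (Set.Ioo_subset_Icc_self hs)).hasDerivWithinAt)) hφint
    intro s hs
    have hs' := Set.Ioo_subset_Icc_self hs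
    have := hHJBpos s hs' (x s) (hxX s hs') (u s) (huU s hs')
    linarith
  rw [hxinit, hterm (x T) hxfinal, intervalIntegral.integral_neg] at key1
  -- so v(t,z) ≤ ∫ l(x,u)
  have step1 : v (t, z) ≤ ∫ s in t..T, l (x s) (u s) := by linarith
  -- Step 2: FTC along x0
  have hDint : IntervalIntegrable
      (fun s => fderiv ℝ v (s, x0 s) (1, f (x0 s) (u0 s))) MeasureTheory.volume t T := by
    have := hfitint.sub hx0int
    simpa using this
  have key2 : (∫ s in t..T, fderiv ℝ v (s, x0 s) (1, f (x0 s) (u0 s)))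
      = v (T, x0 T) - v (t, x0 t) := by
    apply intervalIntegral.integral_eq_sub_of_hasDerivAt
    · intro s hs
      rw [Set.uIcc_of_le hT] at hs
      exact chain x0 u0 hx0dyn s hs
    · exact hDint
  rw [hx0init, hterm (x0 T) hx0final] at key2
  have hsplit : (∫ s in t..T, (l (x0 s) (u0 s) + fderiv ℝ v (s, x0 s) (1, f (x0 s) (u0 s))))
      = (∫ s in t..T, l (x0 s) (u0 s)) + ∫ s in t..T, fderiv ℝ v (s, x0 s) (1, f (x0 s) (u0 s)) :=
    intervalIntegral.integral_add hx0int hDint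
  rw [hsplit, key2] at hfit
  linarith
end

section
/- For the two-dimensional 'minimum exit norm' problem with X = U = B₂, X_T = ∂B₂, dynamics f(x,u) = u, and Lagrangian l0(x,u) = ‖x‖₂² + ‖u‖₂²: for every feasible trajectory from z (ẋ(s) = u(s), x(s) ∈ B₂, u(s) ∈ B₂, x(t) = z, ‖x(T)‖₂ = 1), the cost ∫_t^T (‖x(s)‖₂² + ‖u(s)‖₂²) ds is at least 1 - ‖z‖₂², and the trajectory following the feedback law u = x (i.e., x(s) = z e^{s-t} until exiting the ball) achieves this bound. Hence the optimal value function is v0(z) = 1 - ‖z‖₂². -/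
open MeasureTheory Set intervalIntegral RealInnerProductSpace

/-- 2D minimum exit norm problem (benchmark V-B.3): every feasible trajectory exiting
the unit ball from `z` has cost `∫ (‖x‖² + ‖u‖²) ds ≥ 1 - ‖z‖²`, and for `z ≠ 0` the
feedback trajectory `u = x` (i.e. `x(s) = e^{s-t} z`) achieves the bound. Hence the
optimal value function is `v0(z) = 1 - ‖z‖²`. -/
theorem two_dim_min_exit_norm
    (t : ℝ) (z : EuclideanSpace ℝ (Fin 2)) (hz : ‖z‖ ≤ 1) :
    (∀ (T : ℝ) (x : ℝ → EuclideanSpace ℝ (Fin 2)) (u : ℝ → EuclideanSpace ℝ (Fin 2)),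
      t ≤ T →
      (∀ s ∈ Set.Icc t T, HasDerivAt x (u s) s) →
      (∀ s ∈ Set.Icc t T, ‖u s‖ ≤ 1) →
      (∀ s ∈ Set.Icc t T, ‖x s‖ ≤ 1) →
      x t = z → ‖x T‖ = 1 →
      IntervalIntegrable (fun s => ‖x s‖ ^ 2 + ‖u s‖ ^ 2) MeasureTheory.volume t T →
      (∫ s in t..T, (‖x s‖ ^ 2 + ‖u s‖ ^ 2)) ≥ 1 - ‖z‖ ^ 2) ∧
    (z ≠ 0 →
      ∃ (T : ℝ) (x : ℝ → EuclideanSpace ℝ (Fin 2)) (u : ℝ → EuclideanSpace ℝ (Fin 2)),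
        t ≤ T ∧
        (∀ s ∈ Set.Icc t T, HasDerivAt x (u s) s) ∧
        (∀ s ∈ Set.Icc t T, ‖u s‖ ≤ 1) ∧
        (∀ s ∈ Set.Icc t T, ‖x s‖ ≤ 1) ∧
        x t = z ∧ ‖x T‖ = 1 ∧
        (∀ s, u s = x s) ∧
        (∀ s, x s = Real.exp (s - t) • z) ∧
        (∫ s in t..T, (‖x s‖ ^ 2 + ‖u s‖ ^ 2)) = 1 - ‖z‖ ^ 2) := by
  constructor
  · intro T x u hTt hderiv hu hx hxt hxT hint
    set φ : ℝ → ℝ := fun s => ‖x s‖ ^ 2 with hφ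
    have hφderiv : ∀ s ∈ Set.Icc t T, HasDerivAt φ (2 * ⟪x s, u s⟫) s := by
      intro s hs
      have h := (hderiv s hs).inner ℝ (hderiv s hs)
      have h2 : HasDerivAt (fun r => ⟪x r, x r⟫) (2 * ⟪x s, u s⟫) s := by
        exact h.congr_deriv (by rw [real_inner_comm (x s) (u s)]; ring)
      simpa only [hφ, real_inner_self_eq_norm_sq] using h2
    set g : ℝ → ℝ := fun s => deriv φ s with hg
    have hgeq : ∀ s ∈ Set.Icc t T, g s = 2 * ⟪x s, u s⟫ := fun s hs =>
      (hφderiv s hs).deriv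
    have hgderiv : ∀ s ∈ Set.uIcc t T, HasDerivAt φ (g s) s := by
      intro s hs
      rw [Set.uIcc_of_le hTt] at hs
      rw [hgeq s hs]; exact hφderiv s hs
    have hgmeas : Measurable g := measurable_deriv φ
    have hgbound : ∀ s ∈ Set.Icc t T, |g s| ≤ 2 := by
      intro s hs
      rw [hgeq s hs, abs_mul, abs_two]
      have h1 : |⟪x s, u s⟫| ≤ ‖x s‖ * ‖u s‖ := abs_real_inner_le_norm _ _
      nlinarith [hx s hs, hu s hs, norm_nonneg (x s), norm_nonneg (u s)]
    have hgint : IntervalIntegrable g volume t T := by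
      rw [intervalIntegrable_iff_integrableOn_Ioc_of_le hTt]
      refine Integrable.mono' (g := fun _ => (2:ℝ))
        (integrableOn_const measure_Ioc_lt_top.ne)
        (hgmeas.aestronglyMeasurable.restrict) ?_
      filter_upwards [ae_restrict_mem measurableSet_Ioc] with s hs
      simpa [Real.norm_eq_abs] using hgbound s ⟨le_of_lt hs.1, hs.2⟩
    have hFTC : ∫ s in t..T, g s = φ T - φ t :=
      integral_eq_sub_of_hasDerivAt hgderiv hgint
    have hmono : ∫ s in t..T, g s ≤ ∫ s in t..T, (‖x s‖ ^ 2 + ‖u s‖ ^ 2) := by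
      refine integral_mono_on hTt hgint hint ?_
      intro s hs
      rw [hgeq s hs]
      have h1 : ⟪x s, u s⟫ ≤ ‖x s‖ * ‖u s‖ := real_inner_le_norm _ _
      nlinarith [sq_nonneg (‖x s‖ - ‖u s‖)]
    have : φ T - φ t = 1 - ‖z‖ ^ 2 := by
      simp [hφ, hxt, hxT]
    linarith [hmono, hFTC, this]
  · intro hzne
    have hznorm : 0 < ‖z‖ := norm_pos_iff.2 hzne
    set T : ℝ := t - Real.log ‖z‖ with hT
    have hlog : Real.log ‖z‖ ≤ 0 := Real.log_nonpos (le_of_lt hznorm) hz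
    have hTt : t ≤ T := by rw [hT]; linarith
    have hTsub : T - t = -Real.log ‖z‖ := by rw [hT]; ring
    set x : ℝ → EuclideanSpace ℝ (Fin 2) := fun s => Real.exp (s - t) • z with hx
    have hxnorm : ∀ s, ‖x s‖ = Real.exp (s - t) * ‖z‖ := by
      intro s
      rw [hx]
      simp [norm_smul, Real.norm_eq_abs, abs_of_pos (Real.exp_pos _)]
    have hexpT : Real.exp (T - t) * ‖z‖ = 1 := by
      rw [hTsub, Real.exp_neg, Real.exp_log hznorm]
      field_simp
    have hxb : ∀ s ∈ Set.Icc t T, ‖x s‖ ≤ 1 := by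
      intro s hs
      rw [hxnorm]
      calc Real.exp (s - t) * ‖z‖ ≤ Real.exp (T - t) * ‖z‖ :=
            mul_le_mul_of_nonneg_right (Real.exp_le_exp.2 (by linarith [hs.2]))
              (le_of_lt hznorm)
        _ = 1 := hexpT
    have hderiv : ∀ s, HasDerivAt x (x s) s := by
      intro s
      have h : HasDerivAt (fun s => Real.exp (s - t)) (Real.exp (s - t)) s := by
        simpa [Function.comp_def] using ((Real.hasDerivAt_exp (s - t)).comp s
          ((hasDerivAt_id s).sub_const t))
      simpa [hx] using h.smul_const z
    refine ⟨T, x, x, hTt, fun s _ => hderiv s, hxb, hxb, ?_, ?_, fun s => rfl,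
      fun s => rfl, ?_⟩
    · simp [hx]
    · rw [hxnorm]; exact hexpT
    · have hF : ∀ s ∈ Set.uIcc t T,
          HasDerivAt (fun r => Real.exp (2 * (r - t)) * ‖z‖ ^ 2)
            (‖x s‖ ^ 2 + ‖x s‖ ^ 2) s := by
        intro s _
        have h : HasDerivAt (fun r => Real.exp (2 * (r - t)))
            (Real.exp (2 * (s - t)) * 2) s := by
          simpa [Function.comp_def] using ((Real.hasDerivAt_exp (2 * (s - t))).comp s
            (((hasDerivAt_id s).sub_const t).const_mul 2))
        have h2 := h.mul_const (‖z‖ ^ 2)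
        refine h2.congr_deriv ?_
        rw [hxnorm, mul_pow, ← Real.exp_nat_mul]
        push_cast
        ring_nf
      have hcont : Continuous fun s => ‖x s‖ ^ 2 + ‖x s‖ ^ 2 := by
        have : Continuous x := by
          rw [hx]
          exact (Real.continuous_exp.comp (continuous_id.sub continuous_const)).smul
            continuous_const
        continuity
      rw [integral_eq_sub_of_hasDerivAt hF (hcont.intervalIntegrable t T)]
      have h1 : Real.exp (T - t) = 1 / ‖z‖ := by
        rw [eq_div_iff (ne_of_gt hznorm)]; exact hexpT
      simp only [sub_self, mul_zero, Real.exp_zero, one_mul]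
      rw [two_mul, Real.exp_add, h1]
      field_simp
end
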